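/- Let d ≥ 1, y₀ ∈ ℝ^d, R > 0, and let K = {y ∈ ℝ^d : ‖y − y₀‖ ≤ R}. Let P : [0,1]×[0,1] → ℝ be continuous with |P(τ,σ)| ≤ A₀ for all τ,σ ∈ [0,1]; let B : ℝ^d → Matrix d d ℝ be continuous with operator norm ‖B(y)‖ ≤ C₀ and ‖B(y) − B(z)‖ ≤ C₁‖y − z‖ for all y, z ∈ K; let G : ℝ^d → ℝ^d be continuous with ‖G(y)‖ ≤ D₀ and ‖G(y) − G(z)‖ ≤ D₁‖y − z‖ for all y, z ∈ K. If h ≥ 0 satisfies h·A₀·C₀·D₀ ≤ R and h·A₀·(C₀D₁ + C₁D₀) < 1, then there exists exactly one continuous function u : [0,1] → K satisfying u(τ) = y₀ + h ∫₀^τ B(u(α)) ( ∫₀¹ P(α,σ) G(u(σ)) dσ ) dα for all τ ∈ [0,1]. -/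

import Mathlib

open Set MeasureTheory intervalIntegral

section Aux
variable {d : ℕ}

/-- inner integral -/
noncomputable def ffepI (Pt : ℝ → ℝ → ℝ) (G : EuclideanSpace ℝ (Fin d) → EuclideanSpace ℝ (Fin d))
    (g : ℝ → EuclideanSpace ℝ (Fin d)) (α : ℝ) : EuclideanSpace ℝ (Fin d) :=
  ∫ σ in (0:ℝ)..1, Pt α σ • G (g σ)

/-- integrand of the outer integral -/
noncomputable def ffepPhi (Pt : ℝ → ℝ → ℝ) (B : EuclideanSpace ℝ (Fin d) → Matrix (Fin d) (Fin d) ℝ)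
    (G : EuclideanSpace ℝ (Fin d) → EuclideanSpace ℝ (Fin d))
    (g : ℝ → EuclideanSpace ℝ (Fin d)) (α : ℝ) : EuclideanSpace ℝ (Fin d) :=
  Matrix.toEuclideanCLM (𝕜 := ℝ) (B (g α)) (ffepI Pt G g α)

noncomputable def ffepL (d : ℕ) : Matrix (Fin d) (Fin d) ℝ →ₗ[ℝ]
    (EuclideanSpace ℝ (Fin d) →L[ℝ] EuclideanSpace ℝ (Fin d)) :=
  (LinearMap.toContinuousLinearMap.toLinearMap).comp (Matrix.toEuclideanLin.toLinearMap)

lemma ffepI_continuous {Pt : ℝ → ℝ → ℝ} {G : EuclideanSpace ℝ (Fin d) → EuclideanSpace ℝ (Fin d)}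
    {g : ℝ → EuclideanSpace ℝ (Fin d)}
    (hPt : Continuous fun p : ℝ × ℝ => Pt p.1 p.2) (hG : Continuous G) (hg : Continuous g) :
    Continuous (ffepI Pt G g) := by
  apply intervalIntegral.continuous_parametric_intervalIntegral_of_continuous'
    (f := fun α σ => Pt α σ • G (g σ)) ?_ 0 1
  exact hPt.smul (hG.comp (hg.comp continuous_snd))

lemma ffepPhi_continuous {Pt : ℝ → ℝ → ℝ}
    {B : EuclideanSpace ℝ (Fin d) → Matrix (Fin d) (Fin d) ℝ}
    {G : EuclideanSpace ℝ (Fin d) → EuclideanSpace ℝ (Fin d)}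
    {g : ℝ → EuclideanSpace ℝ (Fin d)}
    (hPt : Continuous fun p : ℝ × ℝ => Pt p.1 p.2)
    (hB : Continuous fun y => (B y : Fin d → Fin d → ℝ))
    (hG : Continuous G) (hg : Continuous g) :
    Continuous (ffepPhi Pt B G g) := by
  have hM : Continuous fun α => Matrix.toEuclideanCLM (𝕜 := ℝ) (B (g α)) := by
    have h1 := LinearMap.continuous_of_finiteDimensional (ffepL d)
    exact h1.comp (hB.comp hg)
  exact hM.clm_apply (ffepI_continuous hPt hG hg)

end Aux

open Matrix intervalIntegral

set_option maxHeartbeats 1600000 in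
theorem ffep_exists_unique
    (d : ℕ) (hd : 1 ≤ d) (y₀ : EuclideanSpace ℝ (Fin d)) (R : ℝ) (hR : 0 < R)
    (K : Set (EuclideanSpace ℝ (Fin d)))
    (hK : K = {y : EuclideanSpace ℝ (Fin d) | ‖y - y₀‖ ≤ R})
    (P : ℝ → ℝ → ℝ) (A₀ C₀ C₁ D₀ D₁ : ℝ)
    (hPcont : ContinuousOn (fun p : ℝ × ℝ => P p.1 p.2)
      (Set.Icc (0:ℝ) 1 ×ˢ Set.Icc (0:ℝ) 1))
    (hPbound : ∀ τ ∈ Set.Icc (0:ℝ) 1, ∀ σ ∈ Set.Icc (0:ℝ) 1, |P τ σ| ≤ A₀)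
    (B : EuclideanSpace ℝ (Fin d) → Matrix (Fin d) (Fin d) ℝ)
    (hBcont : Continuous fun y => (B y : Fin d → Fin d → ℝ))
    (hB0 : ∀ y ∈ K, ‖Matrix.toEuclideanCLM (𝕜 := ℝ) (B y)‖ ≤ C₀)
    (hB1 : ∀ y ∈ K, ∀ z ∈ K,
      ‖Matrix.toEuclideanCLM (𝕜 := ℝ) (B y) - Matrix.toEuclideanCLM (𝕜 := ℝ) (B z)‖
        ≤ C₁ * ‖y - z‖)
    (G : EuclideanSpace ℝ (Fin d) → EuclideanSpace ℝ (Fin d))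
    (hGcont : Continuous G)
    (hG0 : ∀ y ∈ K, ‖G y‖ ≤ D₀)
    (hG1 : ∀ y ∈ K, ∀ z ∈ K, ‖G y - G z‖ ≤ D₁ * ‖y - z‖)
    (h : ℝ) (hh0 : 0 ≤ h)
    (hhR : h * A₀ * C₀ * D₀ ≤ R)
    (hhcontr : h * A₀ * (C₀ * D₁ + C₁ * D₀) < 1) :
    ∃ u : ℝ → EuclideanSpace ℝ (Fin d),
      (ContinuousOn u (Set.Icc (0:ℝ) 1) ∧ (∀ τ ∈ Set.Icc (0:ℝ) 1, u τ ∈ K) ∧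
        ∀ τ ∈ Set.Icc (0:ℝ) 1,
          u τ = y₀ + h • (∫ α in (0:ℝ)..τ,
            WithLp.toLp 2 ((B (u α)).mulVec (fun i => (∫ σ in (0:ℝ)..1, P α σ • G (u σ)) i)) :
              EuclideanSpace ℝ (Fin d))) ∧
      ∀ v : ℝ → EuclideanSpace ℝ (Fin d),
        (ContinuousOn v (Set.Icc (0:ℝ) 1) ∧ (∀ τ ∈ Set.Icc (0:ℝ) 1, v τ ∈ K) ∧
          ∀ τ ∈ Set.Icc (0:ℝ) 1,
            v τ = y₀ + h • (∫ α in (0:ℝ)..τ,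
              WithLp.toLp 2 ((B (v α)).mulVec (fun i => (∫ σ in (0:ℝ)..1, P α σ • G (v σ)) i)) :
                EuclideanSpace ℝ (Fin d))) →
        ∀ τ ∈ Set.Icc (0:ℝ) 1, v τ = u τ := by
  classical
  -- extended kernel
  set pr : ℝ → ℝ := fun x => (Set.projIcc (0:ℝ) 1 zero_le_one x : ℝ) with hpr
  have hprmem : ∀ x, pr x ∈ Set.Icc (0:ℝ) 1 := fun x => (Set.projIcc (0:ℝ) 1 zero_le_one x).2
  have hpreq : ∀ x ∈ Set.Icc (0:ℝ) 1, pr x = x := by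
    intro x hx
    simp [hpr, Set.projIcc_of_mem zero_le_one hx]
  have hprcont : Continuous pr := continuous_subtype_val.comp (continuous_projIcc)
  set Pt : ℝ → ℝ → ℝ := fun a s => P (pr a) (pr s) with hPt
  have hPtcont : Continuous fun p : ℝ × ℝ => Pt p.1 p.2 := by
    apply hPcont.comp_continuous
      ((hprcont.comp continuous_fst).prodMk (hprcont.comp continuous_snd))
    intro x
    exact ⟨hprmem x.1, hprmem x.2⟩
  have hPtbound : ∀ a s, |Pt a s| ≤ A₀ := fun a s => hPbound _ (hprmem a) _ (hprmem s)
  have hPteq : ∀ a ∈ Set.Icc (0:ℝ) 1, ∀ s ∈ Set.Icc (0:ℝ) 1, Pt a s = P a s := by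
    intro a ha s hs
    rw [hPt]; simp only []
    rw [hpreq a ha, hpreq s hs]
  -- basic nonnegativity
  have hy₀K : y₀ ∈ K := by rw [hK]; simp [hR.le]
  have hA₀ : 0 ≤ A₀ := le_trans (abs_nonneg _) (hPbound 0 (by norm_num) 0 (by norm_num))
  have hC₀ : 0 ≤ C₀ := le_trans (norm_nonneg _) (hB0 y₀ hy₀K)
  have hD₀ : 0 ≤ D₀ := le_trans (norm_nonneg _) (hG0 y₀ hy₀K)
  have hzK : y₀ + EuclideanSpace.single ⟨0, hd⟩ R ∈ K := by
    rw [hK]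
    simp only [Set.mem_setOf_eq, add_sub_cancel_left, EuclideanSpace.norm_single]
    rw [Real.norm_eq_abs, abs_of_pos hR]
  have hd0 : ‖y₀ - (y₀ + EuclideanSpace.single ⟨0, hd⟩ R)‖ = R := by
    rw [show y₀ - (y₀ + EuclideanSpace.single (⟨0, hd⟩ : Fin d) R)
        = -(EuclideanSpace.single (⟨0, hd⟩ : Fin d) R) by abel]
    rw [norm_neg, EuclideanSpace.norm_single, Real.norm_eq_abs, abs_of_pos hR]
  have hC₁ : 0 ≤ C₁ := by
    have h1 := hB1 y₀ hy₀K _ hzK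
    rw [hd0] at h1
    nlinarith [norm_nonneg (Matrix.toEuclideanCLM (𝕜 := ℝ) (B y₀) -
      Matrix.toEuclideanCLM (𝕜 := ℝ) (B (y₀ + EuclideanSpace.single ⟨0, hd⟩ R)))]
  have hD₁ : 0 ≤ D₁ := by
    have h1 := hG1 y₀ hy₀K _ hzK
    rw [hd0] at h1
    nlinarith [norm_nonneg (G y₀ - G (y₀ + EuclideanSpace.single ⟨0, hd⟩ R))]
  -- the space
  set X := {f : C(Set.Icc (0:ℝ) 1, EuclideanSpace ℝ (Fin d)) // ∀ t, ‖f t - y₀‖ ≤ R} with hX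
  haveI : CompleteSpace X := by
    have hcl : IsClosed {f : C(Set.Icc (0:ℝ) 1, EuclideanSpace ℝ (Fin d)) | ∀ t, ‖f t - y₀‖ ≤ R} := by
      have heq : {f : C(Set.Icc (0:ℝ) 1, EuclideanSpace ℝ (Fin d)) | ∀ t, ‖f t - y₀‖ ≤ R} =
          ⋂ t, {f : C(Set.Icc (0:ℝ) 1, EuclideanSpace ℝ (Fin d)) | ‖f t - y₀‖ ≤ R} := by
        ext f; simp [Set.mem_iInter]
      rw [heq]
      refine isClosed_iInter fun t => isClosed_le ?_ continuous_const
      exact (continuous_norm.comp ((continuous_eval_const t).sub continuous_const))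
    exact hcl.completeSpace_coe
  haveI : Nonempty X := ⟨⟨ContinuousMap.const _ y₀, fun t => by simp [hR.le]⟩⟩
  -- extension of elements of X
  set gx : X → ℝ → EuclideanSpace ℝ (Fin d) := fun f => Set.IccExtend zero_le_one ⇑f.1 with hgx
  have hgxcont : ∀ f : X, Continuous (gx f) := fun f => (map_continuous f.1).Icc_extend'
  have hgxK : ∀ (f : X) (t : ℝ), gx f t ∈ K := by
    intro f t
    rw [hK]
    exact f.2 _
  have hgxval : ∀ (f : X) (t : ℝ) (ht : t ∈ Set.Icc (0:ℝ) 1), gx f t = f.1 ⟨t, ht⟩ := by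
    intro f t ht
    exact Set.IccExtend_of_mem zero_le_one _ ht
  have hgxdist : ∀ (f g : X) (t : ℝ), ‖gx f t - gx g t‖ ≤ dist f g := by
    intro f g t
    rw [hgx]
    simp only [Set.IccExtend_apply]
    rw [← dist_eq_norm]
    calc dist (f.1 _) (g.1 _) ≤ dist f.1 g.1 := ContinuousMap.dist_apply_le_dist _
      _ = dist f g := (Subtype.dist_eq f g).symm
  -- bounds on the inner integral
  have hIbound : ∀ (g : ℝ → EuclideanSpace ℝ (Fin d)), (∀ t, g t ∈ K) → ∀ α, ‖ffepI Pt G g α‖ ≤ A₀ * D₀ := by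
    intro g hg α
    have := intervalIntegral.norm_integral_le_of_norm_le_const
      (C := A₀ * D₀) (f := fun σ => Pt α σ • G (g σ)) (a := 0) (b := 1) ?_
    · simpa [ffepI] using this
    · intro s _
      rw [norm_smul, Real.norm_eq_abs]
      exact mul_le_mul (hPtbound _ _) (hG0 _ (hg s)) (norm_nonneg _) hA₀
  have hIdiff : ∀ (f g : X) (α : ℝ),
      ‖ffepI Pt G (gx f) α - ffepI Pt G (gx g) α‖ ≤ A₀ * (D₁ * dist f g) := by
    intro f g α
    have hint1 : IntervalIntegrable (fun σ => Pt α σ • G (gx f σ)) volume 0 1 :=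
      ((hPtcont.comp (Continuous.prodMk_right α)).smul (hGcont.comp (hgxcont f))).intervalIntegrable 0 1
    have hint2 : IntervalIntegrable (fun σ => Pt α σ • G (gx g σ)) volume 0 1 :=
      ((hPtcont.comp (Continuous.prodMk_right α)).smul (hGcont.comp (hgxcont g))).intervalIntegrable 0 1
    rw [ffepI, ffepI, ← intervalIntegral.integral_sub hint1 hint2]
    have := intervalIntegral.norm_integral_le_of_norm_le_const
      (C := A₀ * (D₁ * dist f g))
      (f := fun σ => Pt α σ • G (gx f σ) - Pt α σ • G (gx g σ)) (a := 0) (b := 1) ?_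
    · simpa using this
    · intro s _
      show ‖Pt α s • G (gx f s) - Pt α s • G (gx g s)‖ ≤ _
      rw [← smul_sub, norm_smul, Real.norm_eq_abs]
      refine mul_le_mul (hPtbound _ _) ?_ (norm_nonneg _) hA₀
      calc ‖G (gx f s) - G (gx g s)‖ ≤ D₁ * ‖gx f s - gx g s‖ :=
            hG1 _ (hgxK f s) _ (hgxK g s)
        _ ≤ D₁ * dist f g := by
            exact mul_le_mul_of_nonneg_left (hgxdist f g s) hD₁
  -- bounds on Phi
  have hPhicont : ∀ f : X, Continuous (ffepPhi Pt B G (gx f)) := fun f =>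
    ffepPhi_continuous hPtcont hBcont hGcont (hgxcont f)
  have hPhibound : ∀ (f : X) (α : ℝ), ‖ffepPhi Pt B G (gx f) α‖ ≤ C₀ * (A₀ * D₀) := by
    intro f α
    rw [ffepPhi]
    calc ‖Matrix.toEuclideanCLM (𝕜 := ℝ) (B (gx f α)) (ffepI Pt G (gx f) α)‖
        ≤ ‖Matrix.toEuclideanCLM (𝕜 := ℝ) (B (gx f α))‖ * ‖ffepI Pt G (gx f) α‖ :=
          ContinuousLinearMap.le_opNorm _ _
      _ ≤ C₀ * (A₀ * D₀) := mul_le_mul (hB0 _ (hgxK f α))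
          (hIbound (gx f) (hgxK f) α) (norm_nonneg _) hC₀
  have hPhidiff : ∀ (f g : X) (α : ℝ),
      ‖ffepPhi Pt B G (gx f) α - ffepPhi Pt B G (gx g) α‖
        ≤ (A₀ * (C₀ * D₁ + C₁ * D₀)) * dist f g := by
    intro f g α
    set Mf := Matrix.toEuclideanCLM (𝕜 := ℝ) (B (gx f α))
    set Mg := Matrix.toEuclideanCLM (𝕜 := ℝ) (B (gx g α))
    set If := ffepI Pt G (gx f) α
    set Ig := ffepI Pt G (gx g) α
    have hsplit : ffepPhi Pt B G (gx f) α - ffepPhi Pt B G (gx g) α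
        = (Mf - Mg) If + Mg (If - Ig) := by
      simp only [ffepPhi, ContinuousLinearMap.sub_apply, map_sub]
      abel
    rw [hsplit]
    calc ‖(Mf - Mg) If + Mg (If - Ig)‖ ≤ ‖(Mf - Mg) If‖ + ‖Mg (If - Ig)‖ := norm_add_le _ _
      _ ≤ ‖Mf - Mg‖ * ‖If‖ + ‖Mg‖ * ‖If - Ig‖ := by
          gcongr
          · exact ContinuousLinearMap.le_opNorm _ _
          · exact ContinuousLinearMap.le_opNorm _ _
      _ ≤ (C₁ * (dist f g)) * (A₀ * D₀) + C₀ * (A₀ * (D₁ * dist f g)) := by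
          refine add_le_add (mul_le_mul ?_ (hIbound (gx f) (hgxK f) α) (norm_nonneg _)
            (by positivity)) (mul_le_mul (hB0 _ (hgxK g α)) (hIdiff f g α) (norm_nonneg _) hC₀)
          calc ‖Mf - Mg‖ ≤ C₁ * ‖gx f α - gx g α‖ := hB1 _ (hgxK f α) _ (hgxK g α)
            _ ≤ C₁ * dist f g := mul_le_mul_of_nonneg_left (hgxdist f g α) hC₁
      _ = (A₀ * (C₀ * D₁ + C₁ * D₀)) * dist f g := by ring
  -- the map T
  have hcontT : ∀ f : X, Continuous fun t : Set.Icc (0:ℝ) 1 =>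
      y₀ + h • ∫ α in (0:ℝ)..(t:ℝ), ffepPhi Pt B G (gx f) α := by
    intro f
    have h1 : Continuous fun b : ℝ => ∫ α in (0:ℝ)..b, ffepPhi Pt B G (gx f) α :=
      intervalIntegral.continuous_primitive (fun a b => (hPhicont f).intervalIntegrable a b) 0
    exact continuous_const.add ((h1.comp continuous_subtype_val).const_smul h)
  have hboundT : ∀ (f : X) (t : Set.Icc (0:ℝ) 1),
      ‖(y₀ + h • ∫ α in (0:ℝ)..(t:ℝ), ffepPhi Pt B G (gx f) α) - y₀‖ ≤ R := by
    intro f t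
    rw [add_sub_cancel_left, norm_smul, Real.norm_eq_abs, abs_of_nonneg hh0]
    have h1 : ‖∫ α in (0:ℝ)..(t:ℝ), ffepPhi Pt B G (gx f) α‖
        ≤ (C₀ * (A₀ * D₀)) * |(t:ℝ) - 0| := by
      apply intervalIntegral.norm_integral_le_of_norm_le_const
      intro a _
      exact hPhibound f a
    have ht0 : (0:ℝ) ≤ (t:ℝ) := t.2.1
    have ht1 : (t:ℝ) ≤ 1 := t.2.2
    rw [sub_zero, abs_of_nonneg ht0] at h1
    calc h * ‖∫ α in (0:ℝ)..(t:ℝ), ffepPhi Pt B G (gx f) α‖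
        ≤ h * ((C₀ * (A₀ * D₀)) * (t:ℝ)) := mul_le_mul_of_nonneg_left h1 hh0
      _ ≤ h * A₀ * C₀ * D₀ := by
          nlinarith [mul_nonneg (mul_nonneg (mul_nonneg hh0 hC₀) (mul_nonneg hA₀ hD₀))
            (sub_nonneg.mpr ht1)]
      _ ≤ R := hhR
  set T : X → X := fun f =>
    ⟨⟨fun t => y₀ + h • ∫ α in (0:ℝ)..(t:ℝ), ffepPhi Pt B G (gx f) α, hcontT f⟩,
      hboundT f⟩ with hT
  -- contraction
  set q : NNReal := ⟨h * A₀ * (C₀ * D₁ + C₁ * D₀), by positivity⟩ with hq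
  have hq1 : q < 1 := by
    rw [← NNReal.coe_lt_coe]
    exact hhcontr
  have hlip : LipschitzWith q T := by
    apply LipschitzWith.of_dist_le_mul
    intro f g
    rw [Subtype.dist_eq]
    rw [ContinuousMap.dist_le (by positivity)]
    intro t
    show dist (y₀ + h • ∫ α in (0:ℝ)..(t:ℝ), ffepPhi Pt B G (gx f) α)
      (y₀ + h • ∫ α in (0:ℝ)..(t:ℝ), ffepPhi Pt B G (gx g) α) ≤ q * dist f g
    rw [dist_eq_norm, add_sub_add_left_eq_sub, ← smul_sub, norm_smul, Real.norm_eq_abs,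
      abs_of_nonneg hh0]
    rw [← intervalIntegral.integral_sub ((hPhicont f).intervalIntegrable 0 t)
      ((hPhicont g).intervalIntegrable 0 t)]
    have h1 : ‖∫ α in (0:ℝ)..(t:ℝ), (ffepPhi Pt B G (gx f) α - ffepPhi Pt B G (gx g) α)‖
        ≤ ((A₀ * (C₀ * D₁ + C₁ * D₀)) * dist f g) * |(t:ℝ) - 0| := by
      apply intervalIntegral.norm_integral_le_of_norm_le_const
      intro a _
      exact hPhidiff f g a
    have ht0 : (0:ℝ) ≤ (t:ℝ) := t.2.1
    have ht1 : (t:ℝ) ≤ 1 := t.2.2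
    rw [sub_zero, abs_of_nonneg ht0] at h1
    calc h * ‖∫ α in (0:ℝ)..(t:ℝ), (ffepPhi Pt B G (gx f) α - ffepPhi Pt B G (gx g) α)‖
        ≤ h * (((A₀ * (C₀ * D₁ + C₁ * D₀)) * dist f g) * (t:ℝ)) :=
          mul_le_mul_of_nonneg_left h1 hh0
      _ ≤ (h * A₀ * (C₀ * D₁ + C₁ * D₀)) * dist f g := by
          have hc : (0:ℝ) ≤ A₀ * (C₀ * D₁ + C₁ * D₀) := by positivity
          nlinarith [mul_nonneg (mul_nonneg (mul_nonneg hh0 hc)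
            (dist_nonneg (x := f) (y := g))) (sub_nonneg.mpr ht1)]
      _ = q * dist f g := rfl
  have hcontr : ContractingWith q T := ⟨hq1, hlip⟩
  -- fixed point
  set u₀ : X := hcontr.fixedPoint T with hu₀
  have hufix : T u₀ = u₀ := hcontr.fixedPoint_isFixedPt
  -- the integral representation lemma
  have key : ∀ (g v : ℝ → EuclideanSpace ℝ (Fin d)), (∀ s ∈ Set.Icc (0:ℝ) 1, g s = v s) →
      ∀ τ ∈ Set.Icc (0:ℝ) 1,
      (∫ α in (0:ℝ)..τ, ffepPhi Pt B G g α) =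
        (∫ α in (0:ℝ)..τ, WithLp.toLp 2 ((B (v α)).mulVec (fun i => (∫ σ in (0:ℝ)..1, P α σ • G (v σ)) i)) :
          EuclideanSpace ℝ (Fin d)) := by
    intro g v hgv τ hτ
    apply intervalIntegral.integral_congr
    intro a ha
    rw [Set.uIcc_of_le hτ.1] at ha
    have ha' : a ∈ Set.Icc (0:ℝ) 1 := ⟨ha.1, le_trans ha.2 hτ.2⟩
    have hInner : ffepI Pt G g a = (∫ σ in (0:ℝ)..1, P a σ • G (v σ) : EuclideanSpace ℝ (Fin d)) := by
      apply intervalIntegral.integral_congr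
      intro s hs
      rw [Set.uIcc_of_le (zero_le_one)] at hs
      show Pt a s • G (g s) = P a s • G (v s)
      rw [hPteq a ha' s hs, hgv s hs]
    show ffepPhi Pt B G g a = _
    rw [ffepPhi, hInner, hgv a ha']
    rfl
  -- the solution
  refine ⟨gx u₀, ⟨(hgxcont u₀).continuousOn, fun τ _ => hgxK u₀ τ, ?_⟩, ?_⟩
  · -- the equation
    intro τ hτ
    have h1 : gx u₀ τ = u₀.1 ⟨τ, hτ⟩ := hgxval u₀ τ hτ
    have h2 : (T u₀).1 ⟨τ, hτ⟩ = u₀.1 ⟨τ, hτ⟩ := by rw [hufix]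
    have h3 : (T u₀).1 ⟨τ, hτ⟩
        = y₀ + h • ∫ α in (0:ℝ)..τ, ffepPhi Pt B G (gx u₀) α := rfl
    rw [h1, ← h2, h3, key (gx u₀) (gx u₀) (fun s _ => rfl) τ hτ]
  · -- uniqueness
    rintro v ⟨hvc, hvK, hveq⟩ τ hτ
    have hvK' : ∀ t : Set.Icc (0:ℝ) 1, ‖v t - y₀‖ ≤ R := by
      intro t
      have := hvK t t.2
      rw [hK] at this
      exact this
    set fv : X := ⟨⟨fun t : Set.Icc (0:ℝ) 1 => v t, hvc.restrict⟩, hvK'⟩ with hfv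
    have hgxv : ∀ s ∈ Set.Icc (0:ℝ) 1, gx fv s = v s := by
      intro s hs
      rw [hgxval fv s hs]
      rfl
    have hfvfix : Function.IsFixedPt T fv := by
      apply Subtype.ext
      apply ContinuousMap.ext
      intro t
      show y₀ + h • (∫ α in (0:ℝ)..(t:ℝ), ffepPhi Pt B G (gx fv) α) = v t
      rw [key (gx fv) v hgxv (t:ℝ) t.2]
      exact (hveq (t:ℝ) t.2).symm
    have huv : fv = u₀ := hcontr.fixedPoint_unique hfvfix
    calc v τ = fv.1 ⟨τ, hτ⟩ := rfl
      _ = u₀.1 ⟨τ, hτ⟩ := by rw [huv]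
      _ = gx u₀ τ := (hgxval u₀ τ hτ).symm
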